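/- Let M and N be finite matroids on disjoint ground sets, and let P be a matroid on E(M) ∪ E(N) whose collection of cyclic flats is exactly Z and whose ranks on Z are as in the free product construction, namely: Z consists of the cyclic flats X ≠ E(M) of M (with rank r_M(X)) together with the sets E(M) ∪ Y for nonempty cyclic flats Y of N (with rank r_M(E(M)) + r_N(Y)), together with E(M) itself (with rank r_M(E(M))) when M has no coloops and N has no loops. Then a set I ⊆ E(M) ∪ E(N) is independent in P if and only if I ∩ E(M) is independent in M and |I ∩ E(N)| − r_N(I ∩ E(N)) ≤ r_M(E(M)) − |I ∩ E(M)|. -/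

import Mathlib

namespace Matroid

variable {α β : Type*}

/-- A circuit of a matroid: a minimal dependent set. -/
def IsCircuit' (M : Matroid α) (C : Set α) : Prop :=
  M.Dep C ∧ ∀ D, D ⊂ C → M.Indep D

/-- A cyclic flat: a flat that is a (possibly empty) union of circuits. -/
def CyclicFlat (M : Matroid α) (X : Set α) : Prop :=
  M.IsFlat X ∧ ∀ e ∈ X, ∃ C, M.IsCircuit' C ∧ C ⊆ X ∧ e ∈ C

/-- The rank of a set: the maximum size of an independent subset. -/
noncomputable def rk (M : Matroid α) (X : Set α) : ℕ :=
  sSup {n | ∃ I, M.Indep I ∧ I ⊆ X ∧ I.ncard = n}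

/-- Deletion of a set from a matroid. -/
def del (M : Matroid α) (D : Set α) : Matroid α := M ↾ (M.E \ D)

/-- Contraction of a set in a matroid. -/
def con (M : Matroid α) (C : Set α) : Matroid α := (M✶ ↾ (M.E \ C))✶

/-- `N` is a minor of `M` if it is obtained from `M` by a contraction and a deletion. -/
def IsMinorOf (N M : Matroid α) : Prop := ∃ C D, N = (M.con C).del D

/-- Matroid isomorphism: a bijection of ground sets preserving independence. -/
def IsIsoTo (M : Matroid α) (N : Matroid β) : Prop :=
  ∃ e : M.E ≃ N.E, ∀ I : Set M.E,
    M.Indep (Subtype.val '' I) ↔ N.Indep (Subtype.val '' (e '' I))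

end Matroid

namespace Matroid

open Set

variable {α : Type*} {M : Matroid α} {I J X Y Z B C D F : Set α} {e : α}

lemma flat_of_closure_subset (hF : X ⊆ M.E) (h : M.closure X ⊆ X) : M.IsFlat X := by
  refine ⟨fun I Y hIX hIY => ?_, hF⟩
  have h1 : Y ⊆ M.closure I := hIY.subset_closure
  have h2 : M.closure I = M.closure X := hIX.closure_eq_closure
  rw [h2] at h1
  exact h1.trans h

lemma closure_flat' (M : Matroid α) (X : Set α) : M.IsFlat (M.closure X) :=
  flat_of_closure_subset (M.closure_subset_ground X) (by rw [M.closure_closure])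

lemma rk_eq_of_basis' [M.Finite] (hJ : M.IsBasis' J X) : M.rk X = J.ncard := by
  have hJfin : J.Finite := M.set_finite J (hJ.indep.subset_ground)
  apply le_antisymm
  · refine csSup_le ⟨0, ∅, M.empty_indep, empty_subset _, ncard_empty _⟩ ?_
    rintro n ⟨I, hI, hIX, rfl⟩
    obtain ⟨J', hJ', hIJ'⟩ := hI.subset_isBasis'_of_subset hIX
    have hcard : J'.encard = J.encard := hJ'.encard_eq_encard hJ
    have hJ'fin : J'.Finite := M.set_finite J' (hJ'.indep.subset_ground)
    calc I.ncard ≤ J'.ncard := ncard_le_ncard hIJ' hJ'fin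
      _ = J.ncard := by rw [ncard_def, hcard, ← ncard_def]
  · apply le_csSup
    · refine ⟨M.E.ncard, ?_⟩
      rintro n ⟨I, hI, _, rfl⟩
      exact ncard_le_ncard hI.subset_ground M.ground_finite
    · exact ⟨J, hJ.indep, hJ.subset, rfl⟩

lemma Indep.ncard_le_rk [M.Finite] (hI : M.Indep I) (hIX : I ⊆ X) : I.ncard ≤ M.rk X := by
  obtain ⟨J, hJ⟩ := M.exists_isBasis' X
  rw [rk_eq_of_basis' hJ]
  obtain ⟨J', hJ', hIJ'⟩ := hI.subset_isBasis'_of_subset hIX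
  have hcard : J'.encard = J.encard := hJ'.encard_eq_encard hJ
  have hJ'fin : J'.Finite := M.set_finite J' (hJ'.indep.subset_ground)
  calc I.ncard ≤ J'.ncard := ncard_le_ncard hIJ' hJ'fin
    _ = J.ncard := by rw [ncard_def, hcard, ← ncard_def]

lemma Indep.rk_eq [M.Finite] (hI : M.Indep I) : M.rk I = I.ncard :=
  rk_eq_of_basis' hI.isBasis_self.isBasis'

lemma rk_le_ncard [M.Finite] (hX : X.Finite) : M.rk X ≤ X.ncard := by
  obtain ⟨J, hJ⟩ := M.exists_isBasis' X
  rw [rk_eq_of_basis' hJ]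
  exact ncard_le_ncard hJ.subset hX

lemma rk_mono [M.Finite] (h : X ⊆ Y) : M.rk X ≤ M.rk Y := by
  obtain ⟨J, hJ⟩ := M.exists_isBasis' X
  rw [rk_eq_of_basis' hJ]
  exact hJ.indep.ncard_le_rk (hJ.subset.trans h)

lemma rk_closure_eq [M.Finite] (X : Set α) : M.rk (M.closure X) = M.rk X := by
  obtain ⟨J, hJ⟩ := M.exists_isBasis' X
  rw [rk_eq_of_basis' hJ, rk_eq_of_basis' hJ.isBasis_closure_right.isBasis']

lemma rk_le_of_subset_closure [M.Finite] (h : X ⊆ M.closure Y) : M.rk X ≤ M.rk Y :=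
  (rk_mono h).trans (rk_closure_eq Y).le

lemma exists_circuit_of_dep [M.Finite] (hD : M.Dep D) : ∃ C, M.IsCircuit' C ∧ C ⊆ D := by
  have hfin : D.Finite := M.set_finite D hD.subset_ground
  obtain ⟨n, hn⟩ : ∃ n, D.ncard = n := ⟨_, rfl⟩
  induction n using Nat.strong_induction_on generalizing D with
  | _ n IH =>
    by_cases h : ∀ D', D' ⊂ D → M.Indep D'
    · exact ⟨D, ⟨hD, h⟩, Subset.rfl⟩
    push_neg at h
    obtain ⟨D', hss, hdep⟩ := h
    have hD' : M.Dep D' := ⟨hdep, hss.subset.trans hD.subset_ground⟩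
    obtain ⟨C, hC, hCD'⟩ := IH D'.ncard (hn ▸ ncard_lt_ncard hss hfin) hD'
      (hfin.subset hss.subset) rfl
    exact ⟨C, hC, hCD'.trans hss.subset⟩

lemma IsCircuit'.diff_singleton_indep (hC : M.IsCircuit' C) (he : e ∈ C) :
    M.Indep (C \ {e}) :=
  hC.2 _ (diff_singleton_ssubset.mpr he)

lemma IsCircuit'.mem_closure_diff_singleton (hC : M.IsCircuit' C) (he : e ∈ C) :
    e ∈ M.closure (C \ {e}) := by
  have hI := hC.diff_singleton_indep he
  have hdep : M.Dep (insert e (C \ {e})) := by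
    rw [insert_diff_singleton, insert_eq_self.mpr he]; exact hC.1
  exact ((hI.insert_dep_iff).mp hdep).1

lemma IsCircuit'.subset_closure_diff_singleton (hC : M.IsCircuit' C) (he : e ∈ C) :
    C ⊆ M.closure (C \ {e}) := by
  intro c hc
  rcases eq_or_ne c e with rfl | hne
  · exact hC.mem_closure_diff_singleton he
  · exact M.subset_closure _ ((hC.diff_singleton_indep he).subset_ground) ⟨hc, hne⟩

lemma exists_circuit_of_mem_closure [M.Finite] (hX : X ⊆ M.E) (he : e ∈ M.closure X)
    (heX : e ∉ X) : ∃ C, M.IsCircuit' C ∧ C ⊆ insert e X ∧ e ∈ C := by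
  obtain ⟨J, hJ⟩ := M.exists_isBasis X hX
  have heJ : e ∈ M.closure J := by rwa [hJ.closure_eq_closure]
  have heJ' : e ∉ J := fun h => heX (hJ.subset h)
  have hdep : M.Dep (insert e J) := hJ.indep.insert_dep_iff.mpr ⟨heJ, heJ'⟩
  obtain ⟨C, hC, hCJ⟩ := exists_circuit_of_dep hdep
  have heC : e ∈ C := by
    by_contra h
    exact hC.1.not_indep (hJ.indep.subset fun x hx =>
      ((hCJ hx).resolve_left (fun hxe => h (hxe ▸ hx))))
  exact ⟨C, hC, hCJ.trans (insert_subset_insert hJ.subset), heC⟩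

/-- The "cyclic part" of a flat is a cyclic flat. -/
lemma cyclicPart_spec [M.Finite] (hF : M.IsFlat F) :
    M.CyclicFlat {e | e ∈ F ∧ ∃ C, M.IsCircuit' C ∧ C ⊆ F ∧ e ∈ C} ∧
      ∀ C, M.IsCircuit' C → C ⊆ F → C ⊆ {e | e ∈ F ∧ ∃ C, M.IsCircuit' C ∧ C ⊆ F ∧ e ∈ C} := by
  set Z := {e | e ∈ F ∧ ∃ C, M.IsCircuit' C ∧ C ⊆ F ∧ e ∈ C} with hZdef
  have hZF : Z ⊆ F := fun e he => he.1
  have hcirc : ∀ C, M.IsCircuit' C → C ⊆ F → C ⊆ Z := fun C hC hCF c hc =>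
    ⟨hCF hc, C, hC, hCF, hc⟩
  have hZE : Z ⊆ M.E := hZF.trans hF.subset_ground
  refine ⟨⟨flat_of_closure_subset hZE ?_, fun e he => ?_⟩, hcirc⟩
  · intro x hx
    have hxF : x ∈ F := by
      have : M.closure Z ⊆ M.closure F := M.closure_subset_closure hZF
      rw [hF.closure] at this
      exact this hx
    by_contra hxZ
    obtain ⟨C, hC, hCZ, hxC⟩ := exists_circuit_of_mem_closure hZE hx hxZ
    exact hxZ ⟨hxF, C, hC, hCZ.trans (insert_subset hxF hZF), hxC⟩
  · obtain ⟨hef, C, hC, hCF, heC⟩ := he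
    exact ⟨C, hC, hcirc C hC hCF, heC⟩

lemma indep_iff_forall_cyclicFlat [M.Finite] (hIE : I ⊆ M.E) :
    M.Indep I ↔ ∀ Z, M.CyclicFlat Z → (I ∩ Z).ncard ≤ M.rk Z := by
  constructor
  · intro hI Z _
    exact (hI.subset inter_subset_left).ncard_le_rk inter_subset_right
  · intro h
    by_contra hI
    obtain ⟨C, hC, hCI⟩ := exists_circuit_of_dep ⟨hI, hIE⟩
    obtain ⟨hZcf, hcirc⟩ := cyclicPart_spec (closure_flat' M C)
    set Z := {e | e ∈ M.closure C ∧ ∃ C', M.IsCircuit' C' ∧ C' ⊆ M.closure C ∧ e ∈ C'} with hZdef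
    have hCZ : C ⊆ Z := hcirc C hC (M.subset_closure C hC.1.subset_ground)
    have hCfin : C.Finite := M.set_finite C hC.1.subset_ground
    obtain ⟨e, he⟩ := hC.1.nonempty
    have h1 : C.ncard ≤ (I ∩ Z).ncard :=
      ncard_le_ncard (subset_inter hCI hCZ) ((M.set_finite I hIE).inter_of_left _)
    have h2 : M.rk Z < C.ncard := by
      have ha : M.rk Z ≤ M.rk (C \ {e}) := by
        refine rk_le_of_subset_closure (fun z hz => ?_)
        have : z ∈ M.closure C := hz.1
        have hcc : M.closure C ⊆ M.closure (C \ {e}) := by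
          rw [← M.closure_closure (C \ {e})]
          exact M.closure_subset_closure (hC.subset_closure_diff_singleton he)
        exact hcc this
      have hb : M.rk (C \ {e}) ≤ (C \ {e}).ncard := rk_le_ncard hCfin.diff
      have hc : (C \ {e}).ncard < C.ncard := ncard_diff_singleton_lt_of_mem he hCfin
      omega
    exact absurd (h Z hZcf) (by omega)

lemma rk_le_rk_inter_add_ncard_diff [M.Finite] (hB : B ⊆ M.E) (Y : Set α) :
    M.rk B ≤ M.rk (B ∩ Y) + (B \ Y).ncard := by
  have hBfin : B.Finite := M.set_finite B hB
  obtain ⟨J0, hJ0⟩ := M.exists_isBasis' (B ∩ Y)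
  obtain ⟨J, hJ, hJ0J⟩ := hJ0.indep.subset_isBasis'_of_subset (hJ0.subset.trans inter_subset_left)
  have hdiff : J \ J0 ⊆ B \ Y := by
    intro x hx
    refine ⟨hJ.subset hx.1, fun hxY => ?_⟩
    have hx1 : x ∈ M.closure J0 := by
      rw [hJ0.closure_eq_closure]
      exact M.subset_closure _ ((inter_subset_left).trans hB) ⟨hJ.subset hx.1, hxY⟩
    have hx2 : x ∈ M.closure (J \ {x}) :=
      M.closure_subset_closure (subset_diff_singleton hJ0J hx.2) hx1
    exact hJ.indep.notMem_closure_diff_of_mem hx.1 hx2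
  have hJfin : J.Finite := M.set_finite J hJ.indep.subset_ground
  have h1 : (J \ J0).ncard + J0.ncard = J.ncard := ncard_diff_add_ncard_of_subset hJ0J hJfin
  have h2 : (J \ J0).ncard ≤ (B \ Y).ncard := ncard_le_ncard hdiff hBfin.diff
  rw [rk_eq_of_basis' hJ, rk_eq_of_basis' hJ0]
  omega

lemma exists_cyclicFlat_nullity [M.Finite] (hB : B ⊆ M.E) (hlt : M.rk B < B.ncard) :
    ∃ Z, M.CyclicFlat Z ∧ Z.Nonempty ∧
      (B.ncard : ℤ) - (M.rk B : ℤ) ≤ ((B ∩ Z).ncard : ℤ) - (M.rk Z : ℤ) := by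
  have hBfin : B.Finite := M.set_finite B hB
  obtain ⟨J, hJ⟩ := M.exists_isBasis B hB
  obtain ⟨hZcf, hcirc⟩ := cyclicPart_spec (closure_flat' M B)
  set Z := {e | e ∈ M.closure B ∧ ∃ C, M.IsCircuit' C ∧ C ⊆ M.closure B ∧ e ∈ C} with hZdef
  have hJE : J ⊆ M.E := hJ.indep.subset_ground
  have hclJB : M.closure J = M.closure B := hJ.closure_eq_closure
  -- every element of B \ J lies in Z
  have hBJZ : B \ J ⊆ Z := by
    intro d hd
    have hdcl : d ∈ M.closure J := by rw [hclJB]; exact M.subset_closure B hB hd.1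
    obtain ⟨C, hC, hCJ, hdC⟩ := exists_circuit_of_mem_closure hJE hdcl hd.2
    have hCB : C ⊆ M.closure B := by
      refine hCJ.trans (insert_subset ?_ ?_)
      · exact M.subset_closure B hB hd.1
      · exact (hJ.subset).trans (M.subset_closure B hB)
    exact ⟨hCB hdC, C, hC, hCB, hdC⟩
  -- Z ⊆ closure (J ∩ Z)
  have hZcl : Z ⊆ M.closure (J ∩ Z) := by
    intro z hz
    by_cases hzJ : z ∈ J
    · exact M.subset_closure _ ((inter_subset_left).trans hJE) ⟨hzJ, hz⟩
    · have hzcl : z ∈ M.closure J := by rw [hclJB]; exact hz.1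
      obtain ⟨C, hC, hCJ, hzC⟩ := exists_circuit_of_mem_closure hJE hzcl hzJ
      have hCB : C ⊆ M.closure B := by
        refine hCJ.trans (insert_subset ?_ ?_)
        · exact hz.1
        · exact (hJ.subset).trans (M.subset_closure B hB)
      have hCZ : C ⊆ Z := hcirc C hC hCB
      have h1 : C \ {z} ⊆ J ∩ Z := by
        intro c hc
        exact ⟨(hCJ hc.1).resolve_left hc.2, hCZ hc.1⟩
      exact M.closure_subset_closure h1 (hC.mem_closure_diff_singleton hzC)
  have hrkZ : M.rk Z ≤ (J ∩ Z).ncard := by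
    refine (rk_le_of_subset_closure hZcl).trans ?_
    exact rk_le_ncard ((M.set_finite J hJE).inter_of_left _)
  have hJB : J ⊆ B := hJ.subset
  have hrkB : M.rk B = J.ncard := rk_eq_of_basis' hJ.isBasis'
  -- nonempty
  have hne : (B \ J).Nonempty := by
    rw [nonempty_iff_ne_empty, Ne, diff_eq_empty]
    intro hBJ
    have : B.ncard ≤ J.ncard := ncard_le_ncard hBJ (M.set_finite J hJE)
    omega
  -- cardinality count
  have hsub : (B \ J) ∪ (J ∩ Z) ⊆ B ∩ Z := by
    rintro x (hx | hx)
    · exact ⟨hx.1, hBJZ hx⟩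
    · exact ⟨hJB hx.1, hx.2⟩
  have hdisj' : Disjoint (B \ J) (J ∩ Z) :=
    (disjoint_sdiff_left).mono_right inter_subset_left
  have hcard : (B \ J).ncard + (J ∩ Z).ncard ≤ (B ∩ Z).ncard := by
    rw [← ncard_union_eq hdisj' hBfin.diff ((M.set_finite J hJE).inter_of_left _)]
    exact ncard_le_ncard hsub (hBfin.inter_of_left _)
  have hBJcard : (B \ J).ncard + J.ncard = B.ncard := ncard_diff_add_ncard_of_subset hJB hBfin
  exact ⟨Z, hZcf, ⟨_, hBJZ hne.some_mem⟩, by push_cast; omega⟩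

lemma cyclicFlat_closure_empty [M.Finite] (hdep : M.Dep {e}) :
    M.CyclicFlat (M.closure ∅) ∧ e ∈ M.closure ∅ ∧ M.rk (M.closure ∅) = 0 := by
  have hmem : ∀ f, f ∈ M.closure ∅ ↔ M.Dep {f} := by
    intro f
    rw [M.empty_indep.mem_closure_iff]
    simp
  have hcirc : ∀ f, M.Dep {f} → M.IsCircuit' {f} := by
    intro f hf
    refine ⟨hf, fun D hD => ?_⟩
    rw [ssubset_singleton_iff.mp hD]
    exact M.empty_indep
  refine ⟨⟨closure_flat' M ∅, fun f hf => ?_⟩, (hmem e).mpr hdep, ?_⟩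
  · exact ⟨{f}, hcirc f ((hmem f).mp hf), singleton_subset_iff.mpr hf, rfl⟩
  · rw [rk_closure_eq]
    have := rk_le_ncard (M := M) finite_empty
    simpa using this

lemma exists_base_not_mem_of_circuit (hC : M.IsCircuit' C) (he : e ∈ C) :
    ∃ B, M.IsBase B ∧ e ∉ B := by
  obtain ⟨B, hB, hCB⟩ := (hC.diff_singleton_indep he).exists_isBase_superset
  refine ⟨B, hB, fun heB => ?_⟩
  have : C ⊆ B := by
    intro c hc
    rcases eq_or_ne c e with rfl | hne
    · exact heB
    · exact hCB ⟨hc, hne⟩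
  exact hC.1.not_indep (hB.indep.subset this)

end Matroid

/-- Independent sets of the free product: if `P` is a matroid on `E(M) ∪ E(N)` whose cyclic
flats and their ranks are as in the free product construction, then `I ⊆ E(M) ∪ E(N)` is
independent in `P` iff `I ∩ E(M)` is independent in `M` and
`ν_N (I ∩ E(N)) ≤ r M - |I ∩ E(M)|`. -/
theorem free_product_indep {α : Type*} (M N : Matroid α) [M.Finite] [N.Finite]
    (hdisj : Disjoint M.E N.E) (P : Matroid α) (hPE : P.E = M.E ∪ N.E)
    (hZ : {X : Set α | P.CyclicFlat X} =
      ({X : Set α | M.CyclicFlat X ∧ X ≠ M.E} ∪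
        {W : Set α | ∃ Y : Set α, N.CyclicFlat Y ∧ Y ≠ ∅ ∧ W = M.E ∪ Y}) ∪
      {W : Set α | W = M.E ∧ (∀ e ∈ M.E, ∃ B, M.IsBase B ∧ e ∉ B) ∧
        (∀ e ∈ N.E, ∃ B, N.IsBase B ∧ e ∈ B)})
    (hr1 : ∀ X : Set α, M.CyclicFlat X → X ≠ M.E → P.rk X = M.rk X)
    (hr2 : ((∀ e ∈ M.E, ∃ B, M.IsBase B ∧ e ∉ B) ∧ (∀ e ∈ N.E, ∃ B, N.IsBase B ∧ e ∈ B)) →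
      P.rk M.E = M.rk M.E)
    (hr3 : ∀ Y : Set α, N.CyclicFlat Y → Y ≠ ∅ → P.rk (M.E ∪ Y) = M.rk M.E + N.rk Y) :
    ∀ I ⊆ M.E ∪ N.E,
      (P.Indep I ↔ M.Indep (I ∩ M.E) ∧
        ((I ∩ N.E).ncard : ℤ) - (N.rk (I ∩ N.E) : ℤ) ≤
          (M.rk M.E : ℤ) - ((I ∩ M.E).ncard : ℤ)) := by
  intro I hIE
  haveI hPfin : P.Finite := ⟨by rw [hPE]; exact M.ground_finite.union N.ground_finite⟩
  have hIPE : I ⊆ P.E := by rw [hPE]; exact hIE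
  have hIfin : I.Finite := P.set_finite I hIPE
  have hAE : I ∩ M.E ⊆ M.E := Set.inter_subset_right
  have hBE : I ∩ N.E ⊆ N.E := Set.inter_subset_right
  have hAfin : (I ∩ M.E).Finite := hIfin.inter_of_left _
  have hBfin : (I ∩ N.E).Finite := hIfin.inter_of_left _
  have hXinter : ∀ X : Set α, X ⊆ M.E → I ∩ X = (I ∩ M.E) ∩ X := by
    intro X hX
    rw [Set.inter_assoc, Set.inter_eq_self_of_subset_right hX]
  have hsplit : ∀ Y : Set α, Y ⊆ N.E → I ∩ (M.E ∪ Y) = (I ∩ M.E) ∪ ((I ∩ N.E) ∩ Y) := by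
    intro Y hY
    rw [Set.inter_union_distrib_left, Set.inter_assoc, Set.inter_eq_self_of_subset_right hY]
  have hdisjAB : ∀ Y : Set α, Disjoint (I ∩ M.E) ((I ∩ N.E) ∩ Y) := fun Y =>
    hdisj.mono Set.inter_subset_right (Set.inter_subset_left.trans Set.inter_subset_right)
  constructor
  · -- forward direction
    intro hI
    have hMA : M.Indep (I ∩ M.E) := by
      rw [Matroid.indep_iff_forall_cyclicFlat hAE]
      intro X hX
      by_cases hXE : X = M.E
      · subst hXE
        rw [Set.inter_assoc, Set.inter_self]
        by_cases hN : ∀ e ∈ N.E, ∃ B, N.IsBase B ∧ e ∈ B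
        · have hM : ∀ e ∈ M.E, ∃ B, M.IsBase B ∧ e ∉ B := by
            intro e he
            obtain ⟨C, hC, _, heC⟩ := hX.2 e he
            exact Matroid.exists_base_not_mem_of_circuit hC heC
          have h1 : (I ∩ M.E).ncard ≤ P.rk M.E :=
            (hI.subset Set.inter_subset_left).ncard_le_rk Set.inter_subset_right
          rwa [hr2 ⟨hM, hN⟩] at h1
        · push_neg at hN
          obtain ⟨e, heN, hno⟩ := hN
          have hdepe : N.Dep {e} := by
            refine ⟨fun hind => ?_, Set.singleton_subset_iff.mpr heN⟩
            obtain ⟨B', hB', hsub⟩ := hind.exists_isBase_superset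
            exact hno B' hB' (hsub rfl)
          obtain ⟨hcf, hecl, hrk0⟩ := Matroid.cyclicFlat_closure_empty hdepe
          have hYne : N.closure ∅ ≠ ∅ := Set.nonempty_iff_ne_empty.mp ⟨e, hecl⟩
          have h1 : (I ∩ (M.E ∪ N.closure ∅)).ncard ≤ P.rk (M.E ∪ N.closure ∅) :=
            (hI.subset Set.inter_subset_left).ncard_le_rk Set.inter_subset_right
          rw [hr3 _ hcf hYne, hrk0, add_zero] at h1
          have h2 : (I ∩ M.E).ncard ≤ (I ∩ (M.E ∪ N.closure ∅)).ncard :=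
            Set.ncard_le_ncard (Set.inter_subset_inter_right I Set.subset_union_left)
              (hIfin.inter_of_left _)
          omega
      · have h1 : (I ∩ X).ncard ≤ P.rk X :=
          (hI.subset Set.inter_subset_left).ncard_le_rk Set.inter_subset_right
        rw [hr1 X hX hXE] at h1
        rw [← hXinter X hX.1.subset_ground]
        exact h1
    refine ⟨hMA, ?_⟩
    have hArk : (I ∩ M.E).ncard ≤ M.rk M.E := hMA.ncard_le_rk hAE
    by_cases hnu : N.rk (I ∩ N.E) < (I ∩ N.E).ncard
    · obtain ⟨Z, hZcf, hZne, hineq⟩ := Matroid.exists_cyclicFlat_nullity hBE hnu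
      have hZNE : Z ⊆ N.E := hZcf.1.subset_ground
      have h1 : (I ∩ (M.E ∪ Z)).ncard ≤ P.rk (M.E ∪ Z) :=
        (hI.subset Set.inter_subset_left).ncard_le_rk Set.inter_subset_right
      rw [hr3 Z hZcf (Set.nonempty_iff_ne_empty.mp hZne), hsplit Z hZNE,
        Set.ncard_union_eq (hdisjAB Z) hAfin (hBfin.inter_of_left _)] at h1
      omega
    · omega
  · -- backward direction
    rintro ⟨hMA, hineq⟩
    rw [Matroid.indep_iff_forall_cyclicFlat hIPE]
    intro Z hZcf
    have hmem := (Set.ext_iff.mp hZ Z).mp hZcf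
    simp only [Set.mem_union, Set.mem_setOf_eq] at hmem
    have hBrk : N.rk (I ∩ N.E) ≤ (I ∩ N.E).ncard := Matroid.rk_le_ncard hBfin
    rcases hmem with (⟨hX, hXE⟩ | ⟨Y, hY, hYne, rfl⟩) | ⟨rfl, hc1, hc2⟩
    · rw [hr1 Z hX hXE, hXinter Z hX.1.subset_ground]
      exact (hMA.subset Set.inter_subset_left).ncard_le_rk Set.inter_subset_right
    · have hYNE : Y ⊆ N.E := hY.1.subset_ground
      rw [hr3 Y hY hYne, hsplit Y hYNE,
        Set.ncard_union_eq (hdisjAB Y) hAfin (hBfin.inter_of_left _)]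
      have h1 : N.rk (I ∩ N.E) ≤ N.rk ((I ∩ N.E) ∩ Y) + ((I ∩ N.E) \ Y).ncard :=
        Matroid.rk_le_rk_inter_add_ncard_diff hBE Y
      have h2 : N.rk ((I ∩ N.E) ∩ Y) ≤ N.rk Y := Matroid.rk_mono Set.inter_subset_right
      have h3 : ((I ∩ N.E) \ ((I ∩ N.E) ∩ Y)).ncard + ((I ∩ N.E) ∩ Y).ncard
          = (I ∩ N.E).ncard :=
        Set.ncard_diff_add_ncard_of_subset Set.inter_subset_left hBfin
      rw [Set.diff_self_inter] at h3
      omega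
    · rw [hr2 ⟨hc1, hc2⟩]
      omega
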